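/- Fix K ≥ 1, λ > 0, p_1,…,p_K > 0 with ∑ p_k = 1, μ_1,…,μ_K > 0, μ_0 > 0, and a class k ∈ {1,…,K}. For every n ∈ ℕ^K, the series ∑_{r=0}^{∞} (M_k^r u_k)(n) converges, and its sum P_k(n) satisfies 0 < P_k(n) ≤ 1. -/

import Mathlib

open Finset Function

/-- `Λ_k(n) = λ + ∑_ℓ (n_ℓ + δ_{kℓ}) μ_ℓ/(|n|+1) + (|n|+1) μ₀`. -/
noncomputable def Lam (K : ℕ) (lam mu0 : ℝ) (mu : Fin K → ℝ) (k : Fin K)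
    (n : Fin K → ℕ) : ℝ :=
  lam + (∑ l, ((n l : ℝ) + if l = k then 1 else 0) * mu l / ((∑ m, (n m : ℝ)) + 1)) +
    ((∑ m, (n m : ℝ)) + 1) * mu0

/-- The vector `u_k`, with `u_k(n) = μ₀ / Λ_k(n)`. -/
noncomputable def uvec (K : ℕ) (lam mu0 : ℝ) (mu : Fin K → ℝ) (k : Fin K)
    (n : Fin K → ℕ) : ℝ :=
  mu0 / Lam K lam mu0 mu k n

/-- The operator `M_k` acting on functions on `ℕ^K`:
`(M_k f)(n) = ∑_j (λ p_j/Λ_k(n)) f(n+e_j)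
  + ∑_j ((n_j μ_j/(|n|+1) + n_j μ₀)/Λ_k(n)) f(n−e_j)`
(the terms with `n_j = 0` vanish since their coefficient is `0`). -/
noncomputable def Mop (K : ℕ) (lam mu0 : ℝ) (p mu : Fin K → ℝ) (k : Fin K)
    (f : (Fin K → ℕ) → ℝ) : (Fin K → ℕ) → ℝ := fun n =>
  (∑ j, lam * p j / Lam K lam mu0 mu k n * f (update n j (n j + 1))) +
    ∑ j, ((n j : ℝ) * mu j / ((∑ m, (n m : ℝ)) + 1) + (n j : ℝ) * mu0) /
        Lam K lam mu0 mu k n * f (update n j (n j - 1))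

section aux
variable (K : ℕ) (lam mu0 : ℝ) (p mu : Fin K → ℝ) (k : Fin K)

lemma sumn_pos (n : Fin K → ℕ) : (0:ℝ) < (∑ m, (n m : ℝ)) + 1 := by
  positivity

lemma Lam_pos (hlam : 0 < lam) (hmu0 : 0 < mu0) (hmu : ∀ j, 0 < mu j)
    (n : Fin K → ℕ) : 0 < Lam K lam mu0 mu k n := by
  have h1 : (0:ℝ) ≤ ∑ l, ((n l : ℝ) + if l = k then 1 else 0) * mu l / ((∑ m, (n m : ℝ)) + 1) := by
    refine Finset.sum_nonneg fun l _ => ?_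
    have h0 := (hmu l).le
    have h2 := (sumn_pos K n).le
    have h3 : (0:ℝ) ≤ (n l : ℝ) + if l = k then 1 else 0 := by positivity
    positivity
  have h3 : 0 < ((∑ m, (n m : ℝ)) + 1) * mu0 := mul_pos (sumn_pos K n) hmu0
  unfold Lam; linarith

lemma coeffA_nonneg (hlam : 0 < lam) (hmu0 : 0 < mu0) (hp : ∀ j, 0 < p j)
    (hmu : ∀ j, 0 < mu j) (n : Fin K → ℕ) (j : Fin K) :
    0 ≤ lam * p j / Lam K lam mu0 mu k n := by
  have h := Lam_pos K lam mu0 mu k hlam hmu0 hmu n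
  have h2 := (hp j).le
  positivity

lemma coeffB_nonneg (hlam : 0 < lam) (hmu0 : 0 < mu0)
    (hmu : ∀ j, 0 < mu j) (n : Fin K → ℕ) (j : Fin K) :
    0 ≤ ((n j : ℝ) * mu j / ((∑ m, (n m : ℝ)) + 1) + (n j : ℝ) * mu0) /
        Lam K lam mu0 mu k n := by
  have h := Lam_pos K lam mu0 mu k hlam hmu0 hmu n
  have h2 := (sumn_pos K n).le
  have h3 := (hmu j).le
  have h4 := hmu0.le
  positivity

lemma Mop_nonneg (hlam : 0 < lam) (hmu0 : 0 < mu0) (hp : ∀ j, 0 < p j)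
    (hmu : ∀ j, 0 < mu j) (f : (Fin K → ℕ) → ℝ) (hf : ∀ m, 0 ≤ f m) (n : Fin K → ℕ) :
    0 ≤ Mop K lam mu0 p mu k f n := by
  unfold Mop
  have h1 : (0:ℝ) ≤ ∑ j, lam * p j / Lam K lam mu0 mu k n * f (update n j (n j + 1)) :=
    Finset.sum_nonneg fun j _ =>
      mul_nonneg (coeffA_nonneg K lam mu0 p mu k hlam hmu0 hp hmu n j) (hf _)
  have h2 : (0:ℝ) ≤ ∑ j, ((n j : ℝ) * mu j / ((∑ m, (n m : ℝ)) + 1) + (n j : ℝ) * mu0) /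
      Lam K lam mu0 mu k n * f (update n j (n j - 1)) :=
    Finset.sum_nonneg fun j _ =>
      mul_nonneg (coeffB_nonneg K lam mu0 mu k hlam hmu0 hmu n j) (hf _)
  linarith

lemma Mop_mono (hlam : 0 < lam) (hmu0 : 0 < mu0) (hp : ∀ j, 0 < p j)
    (hmu : ∀ j, 0 < mu j) (f g : (Fin K → ℕ) → ℝ) (hfg : ∀ m, f m ≤ g m) (n : Fin K → ℕ) :
    Mop K lam mu0 p mu k f n ≤ Mop K lam mu0 p mu k g n := by
  unfold Mop
  have h1 := Finset.sum_le_sum fun j (_ : j ∈ Finset.univ) =>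
      mul_le_mul_of_nonneg_left (hfg (update n j (n j + 1)))
        (coeffA_nonneg K lam mu0 p mu k hlam hmu0 hp hmu n j)
  have h2 := Finset.sum_le_sum fun j (_ : j ∈ Finset.univ) =>
      mul_le_mul_of_nonneg_left (hfg (update n j (n j - 1)))
        (coeffB_nonneg K lam mu0 mu k hlam hmu0 hmu n j)
  exact add_le_add h1 h2

lemma Mop_one_le (hlam : 0 < lam) (hmu0 : 0 < mu0) (hp : ∀ j, 0 < p j)
    (hpsum : ∑ j, p j = 1) (hmu : ∀ j, 0 < mu j) (n : Fin K → ℕ) :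
    Mop K lam mu0 p mu k (fun _ => 1) n ≤ 1 - uvec K lam mu0 mu k n := by
  have hL := Lam_pos K lam mu0 mu k hlam hmu0 hmu n
  have hS := sumn_pos K n
  set S : ℝ := (∑ m, (n m : ℝ)) + 1 with hSdef
  have hkey : ∑ l, ((n l : ℝ) + if l = k then 1 else 0) * mu l / S
      = (∑ l, (n l : ℝ) * mu l / S) + mu k / S := by
    have h : mu k / S = ∑ l, (if l = k then mu l / S else 0) := by
      simp [Finset.sum_ite_eq']
    rw [h, ← Finset.sum_add_distrib]
    refine Finset.sum_congr rfl fun l _ => ?_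
    by_cases hl : l = k
    · subst hl; simp; ring
    · simp [hl]
  have hLameq : Lam K lam mu0 mu k n
      = lam + ((∑ l, (n l : ℝ) * mu l / S) + mu k / S) + S * mu0 := by
    unfold Lam; rw [← hSdef, hkey]
  have hexp : (∑ j, ((n j : ℝ) * mu j / S + (n j : ℝ) * mu0))
      = (∑ j, (n j : ℝ) * mu j / S) + (S - 1) * mu0 := by
    rw [Finset.sum_add_distrib, ← Finset.sum_mul]
    congr 1
    rw [hSdef]; ring
  unfold Mop uvec
  simp only [mul_one, ← hSdef]
  rw [← Finset.sum_div, ← Finset.sum_div, ← Finset.mul_sum, hpsum, mul_one,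
    ← add_div, hexp]
  have hR : (1 - mu0 / Lam K lam mu0 mu k n) * Lam K lam mu0 mu k n
      = Lam K lam mu0 mu k n - mu0 := by
    field_simp
  rw [div_le_iff₀ hL, hR, hLameq]
  have hmuk : 0 ≤ mu k / S := by
    have := (hmu k).le; positivity
  linarith

lemma Mop_sum (R : ℕ) (f : ℕ → (Fin K → ℕ) → ℝ) (n : Fin K → ℕ) :
    Mop K lam mu0 p mu k (fun m => ∑ r ∈ Finset.range R, f r m) n
      = ∑ r ∈ Finset.range R, Mop K lam mu0 p mu k (f r) n := by
  unfold Mop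
  rw [Finset.sum_add_distrib]
  congr 1
  · simp only [Finset.mul_sum]; exact Finset.sum_comm
  · simp only [Finset.mul_sum]; exact Finset.sum_comm

end aux

/-- For every state `n ∈ ℕ^K`, the series `∑_{r=0}^∞ (M_k^r u_k)(n)`
converges, and its sum `P_k(n)` satisfies `0 < P_k(n) ≤ 1`. -/
theorem stmt5 (K : ℕ) (hK : 1 ≤ K) (lam mu0 : ℝ) (hlam : 0 < lam) (hmu0 : 0 < mu0)
    (p mu : Fin K → ℝ) (hp : ∀ j, 0 < p j) (hpsum : ∑ j, p j = 1) (hmu : ∀ j, 0 < mu j)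
    (k : Fin K) :
    ∀ n : Fin K → ℕ,
      Summable (fun r : ℕ => ((Mop K lam mu0 p mu k)^[r] (uvec K lam mu0 mu k)) n) ∧
      0 < ∑' r : ℕ, ((Mop K lam mu0 p mu k)^[r] (uvec K lam mu0 mu k)) n ∧
      (∑' r : ℕ, ((Mop K lam mu0 p mu k)^[r] (uvec K lam mu0 mu k)) n) ≤ 1 := by
  set M := Mop K lam mu0 p mu k with hM
  set u := uvec K lam mu0 mu k with hu
  have hupos : ∀ m, 0 < u m := fun m =>
    div_pos hmu0 (Lam_pos K lam mu0 mu k hlam hmu0 hmu m)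
  have hnn : ∀ r : ℕ, ∀ m, 0 ≤ (M^[r] u) m := by
    intro r
    induction r with
    | zero => exact fun m => (hupos m).le
    | succ r ih =>
      intro m
      rw [Function.iterate_succ_apply']
      exact Mop_nonneg K lam mu0 p mu k hlam hmu0 hp hmu _ ih m
  have hpart : ∀ R : ℕ, ∀ m, (∑ r ∈ Finset.range R, (M^[r] u) m) ≤ 1 := by
    intro R
    induction R with
    | zero => simp
    | succ R ih =>
      intro m
      rw [Finset.sum_range_succ']
      simp only [Function.iterate_succ_apply', Function.iterate_zero_apply]
      rw [← Mop_sum K lam mu0 p mu k R (fun r => M^[r] u)]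
      have h1 := Mop_mono K lam mu0 p mu k hlam hmu0 hp hmu
        (fun m' => ∑ r ∈ Finset.range R, (M^[r] u) m') (fun _ => 1) ih m
      have h2 := Mop_one_le K lam mu0 p mu k hlam hmu0 hp hpsum hmu m
      have h3 : u m = uvec K lam mu0 mu k m := rfl
      rw [h3]
      linarith
  intro n
  have hsum : Summable (fun r : ℕ => (M^[r] u) n) :=
    summable_of_sum_range_le (fun r => hnn r n) (fun R => hpart R n)
  refine ⟨hsum, ?_, ?_⟩
  · have h0 : (M^[0] u) n ≤ ∑' r : ℕ, (M^[r] u) n :=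
      hsum.le_tsum 0 (fun i _ => hnn i n)
    simp only [Function.iterate_zero_apply] at h0
    exact lt_of_lt_of_le (hupos n) h0
  · exact hsum.tsum_le_of_sum_range_le (fun R => hpart R n)
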